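/- The purely imaginary roots of the limit dispersion relation at m=6 are exactly 0 and ±√3·i: for υ ∈ ℝ, D₀(iυ;6) = 0 if and only if υ ∈ {0, √3, −√3}. -/
import Mathlib

open Complex

/-- Principal branch of the complex square root. -/
noncomputable def csqrt (z : ℂ) : ℂ := z ^ (1/2 : ℂ)

/-- The limit dispersion relation D₀(λ;m). -/
noncomputable def dispersion0 (m : ℝ) (l : ℂ) : ℂ :=
  -(1/2) * (2 * ((m : ℂ) + l) + 1 + csqrt (1 + 4 * l)) *
    (1 - csqrt (1 + 4 * l) / (1 + (m : ℂ))) + (m : ℂ)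

lemma sq_csqrt (z : ℂ) : csqrt z ^ 2 = z := by
  have := Complex.cpow_nat_inv_pow z (n := 2) (by norm_num)
  simpa [csqrt, one_div] using this

lemma csqrt_sq {w : ℂ} (hw : 0 < w.re) : csqrt (w ^ 2) = w := by
  have := Complex.sq_cpow_two_inv hw
  simpa [csqrt, one_div] using this

/-- the purely imaginary roots of D₀(·;6) are exactly 0 and
±√3·i. -/
theorem purely_imaginary_roots_at_m6 (υ : ℝ) :
    dispersion0 6 (Complex.I * υ) = 0 ↔
      υ = 0 ∨ υ = Real.sqrt 3 ∨ υ = -Real.sqrt 3 := by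
  have hI : Complex.I ^ 2 = -1 := Complex.I_sq
  constructor
  · intro h
    set s : ℂ := csqrt (1 + 4 * (Complex.I * υ)) with hs_def
    have hs : s ^ 2 = 1 + 4 * (Complex.I * υ) := sq_csqrt _
    have h' : -(1/2 : ℂ) * (2 * ((6 : ℝ) + Complex.I * υ) + 1 + s) *
        (1 - s / (1 + (6 : ℝ))) + (6 : ℝ) = 0 := h
    have key : (6 + 2 * Complex.I * υ) * s = 6 + 10 * Complex.I * υ := by
      push_cast at h'
      linear_combination (14 : ℂ) * h' - hs
    have hsq : ((6 : ℂ) + 2 * Complex.I * υ) ^ 2 * (1 + 4 * (Complex.I * υ))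
        = (6 + 10 * Complex.I * υ) ^ 2 := by
      calc ((6:ℂ) + 2 * Complex.I * υ) ^ 2 * (1 + 4 * (Complex.I * υ))
          = ((6 + 2 * Complex.I * υ) * s) ^ 2 := by rw [mul_pow, hs]
        _ = (6 + 10 * Complex.I * υ) ^ 2 := by rw [key]
    have hpoly : (υ : ℂ) ^ 3 = 3 * υ := by
      linear_combination (Complex.I/16) * hsq
        - (3*(υ:ℂ) + (υ:ℂ)^3*(Complex.I^2 - 1)) * hI
    have hr : υ ^ 3 = 3 * υ := by exact_mod_cast hpoly
    have hfac : υ * (υ ^ 2 - 3) = 0 := by linear_combination hr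
    rcases mul_eq_zero.mp hfac with h0 | h3
    · exact Or.inl h0
    · have hυ2 : υ ^ 2 = (Real.sqrt 3) ^ 2 := by
        rw [Real.sq_sqrt (by norm_num : (0:ℝ) ≤ 3)]
        linarith [sub_eq_zero.mp h3]
      exact Or.inr (sq_eq_sq_iff_eq_or_eq_neg.mp hυ2)
  · intro h
    have h3 : ((Real.sqrt 3 : ℝ) : ℂ) ^ 2 = 3 := by
      rw [← Complex.ofReal_pow, Real.sq_sqrt (by norm_num : (0:ℝ) ≤ 3)]
      norm_num
    rcases h with rfl | rfl | rfl
    · have harg : (1 : ℂ) + 4 * (Complex.I * ((0:ℝ):ℂ)) = 1 := by norm_num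
      show -(1/2 : ℂ) * (2 * ((6 : ℝ) + Complex.I * ((0:ℝ):ℂ)) + 1 + csqrt (1 + 4 * (Complex.I * ((0:ℝ):ℂ)))) *
        (1 - csqrt (1 + 4 * (Complex.I * ((0:ℝ):ℂ))) / (1 + ((6:ℝ):ℂ))) + ((6:ℝ):ℂ) = 0
      rw [harg]
      have : csqrt 1 = 1 := by simp [csqrt]
      rw [this]; push_cast; ring
    · set t : ℂ := ((Real.sqrt 3 : ℝ) : ℂ) with ht
      have harg : (1 : ℂ) + 4 * (Complex.I * t) = (2 + t * Complex.I) ^ 2 := by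
        linear_combination (-t^2) * hI + h3
      have hcs : csqrt (1 + 4 * (Complex.I * t)) = 2 + t * Complex.I := by
        rw [harg]
        refine csqrt_sq ?_
        rw [ht]; simp
      show -(1/2 : ℂ) * (2 * ((6 : ℝ) + Complex.I * t) + 1 + csqrt (1 + 4 * (Complex.I * t))) *
        (1 - csqrt (1 + 4 * (Complex.I * t)) / (1 + ((6:ℝ):ℂ))) + ((6:ℝ):ℂ) = 0
      rw [hcs]
      push_cast
      linear_combination (3*t^2/14) * hI - (3/14 : ℂ) * h3
    · set t : ℂ := ((Real.sqrt 3 : ℝ) : ℂ) with ht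
      have hneg : ((-Real.sqrt 3 : ℝ) : ℂ) = -t := by push_cast; ring
      have harg : (1 : ℂ) + 4 * (Complex.I * (-t)) = (2 - t * Complex.I) ^ 2 := by
        linear_combination (-t^2) * hI + h3
      have hcs : csqrt (1 + 4 * (Complex.I * (-t))) = 2 - t * Complex.I := by
        rw [harg]
        refine csqrt_sq ?_
        rw [ht]; simp
      show -(1/2 : ℂ) * (2 * ((6 : ℝ) + Complex.I * ((-Real.sqrt 3 : ℝ):ℂ)) + 1 + csqrt (1 + 4 * (Complex.I * ((-Real.sqrt 3 : ℝ):ℂ)))) *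
        (1 - csqrt (1 + 4 * (Complex.I * ((-Real.sqrt 3 : ℝ):ℂ))) / (1 + ((6:ℝ):ℂ))) + ((6:ℝ):ℂ) = 0
      rw [hneg, hcs]
      push_cast
      linear_combination (3*t^2/14) * hI - (3/14 : ℂ) * h3
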